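/- Suppose f is continuous and strictly positive on [0,infinity). For any fixed S' >= 0, R > 0, and any real gamma, the function S maps to R*Xhi(S;S') - gamma*S is strictly concave on [0,infinity). (This is the larger firm's capacity-stage objective, the second-priority equilibrium payoff R times Xhi minus the opportunity cost.) -/

import Mathlib

open MeasureTheory

/-- Cumulative distribution function of the density `f` on `[0, ∞)`. -/
noncomputable def cdf (f : ℝ → ℝ) (x : ℝ) : ℝ := ∫ t in (0 : ℝ)..x, f t

/-- Expected second-priority allocation of a storage of capacity `S` when the
opponent has capacity `S'`:
`Xhi(S; S') = ∫_0^S b f(b + S') db + S (1 - F(S + S'))`. -/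
noncomputable def Xhi (f : ℝ → ℝ) (S S' : ℝ) : ℝ :=
  (∫ b in (0 : ℝ)..S, b * f (b + S')) + S * (1 - cdf f (S + S'))

/-- A primitive of a function continuous on `[0, ∞)` is continuous on `[0, ∞)`. -/
lemma contOn_primitive_aux (h : ℝ → ℝ) (hc : ContinuousOn h (Set.Ici 0)) :
    ContinuousOn (fun x => ∫ t in (0 : ℝ)..x, h t) (Set.Ici 0) := by
  intro x hx
  have hx0 : (0 : ℝ) ≤ x := hx
  have hsub : Set.uIcc (0 : ℝ) (x + 1) ⊆ Set.Ici 0 := by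
    rw [Set.uIcc_of_le (by linarith)]
    exact fun y hy => hy.1
  have hint : IntegrableOn h (Set.uIcc (0 : ℝ) (x + 1)) := by
    rw [Set.uIcc_of_le (by linarith)]
    exact (hc.mono (by rw [Set.uIcc_of_le (by linarith)] at hsub; exact hsub)).integrableOn_Icc
  have hcont := intervalIntegral.continuousOn_primitive_interval hint
  have hmem : Set.uIcc (0 : ℝ) (x + 1) ∈ nhdsWithin x (Set.Ici 0) := by
    rw [Set.uIcc_of_le (by linarith), ← Set.Ici_inter_Iic]
    exact Filter.inter_mem self_mem_nhdsWithin
      (mem_nhdsWithin_of_mem_nhds (Iic_mem_nhds (by linarith)))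
  exact (hcont x (by rw [Set.uIcc_of_le (by linarith)]; exact ⟨hx0, by linarith⟩)).mono_of_mem_nhdsWithin
    hmem

/-- derivative of a primitive at an interior point. -/
lemma primitive_hasDerivAt (h : ℝ → ℝ) (hc : ContinuousOn h (Set.Ici 0))
    {x : ℝ} (hx : 0 < x) :
    HasDerivAt (fun y => ∫ t in (0 : ℝ)..y, h t) (h x) x := by
  have hci : ContinuousOn h (Set.Ioi 0) := hc.mono (fun y hy => Set.mem_Ici.mpr (le_of_lt (Set.mem_Ioi.mp hy)))
  have hInt : IntervalIntegrable h MeasureTheory.volume 0 x := by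
    apply ContinuousOn.intervalIntegrable
    apply hc.mono
    rw [Set.uIcc_of_le hx.le]
    exact fun y hy => hy.1
  have hmeas : StronglyMeasurableAtFilter h (nhds x) MeasureTheory.volume := by
    have heq : nhdsWithin x (Set.Ioi 0) = nhds x := nhdsWithin_eq_nhds.mpr (Ioi_mem_nhds hx)
    exact heq ▸ (hci.stronglyMeasurableAtFilter_nhdsWithin measurableSet_Ioi x)
  have hca : ContinuousAt h x := hc.continuousAt (Ici_mem_nhds hx)
  exact intervalIntegral.integral_hasDerivAt_right hInt hmeas hca

/-- If the probability density `f` is continuous and strictly positive on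
`[0, ∞)`, then for any fixed `S' ≥ 0`, `R > 0` and any real `γ`, the larger
firm's capacity-stage objective `S ↦ R * Xhi(S; S') - γ * S` is strictly
concave on `[0, ∞)`. -/
theorem larger_firm_objective_strictConcave (f : ℝ → ℝ)
    (hf_cont : ContinuousOn f (Set.Ici 0))
    (hf_pos : ∀ x ∈ Set.Ici (0 : ℝ), 0 < f x)
    (hf_int : IntegrableOn f (Set.Ici 0))
    (hf_tot : (∫ x in Set.Ici (0 : ℝ), f x) = 1)
    (S' : ℝ) (hS' : 0 ≤ S') (R : ℝ) (hR : 0 < R) (γ : ℝ) :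
    StrictConcaveOn ℝ (Set.Ici 0) (fun S => R * Xhi f S S' - γ * S) := by
  -- the shifted integrand
  set h : ℝ → ℝ := fun b => b * f (b + S') with hh
  have hmap : Set.MapsTo (fun b : ℝ => b + S') (Set.Ici 0) (Set.Ici 0) :=
    fun b hb => by simp only [Set.mem_Ici] at *; linarith
  have hcomp : ContinuousOn (fun b : ℝ => f (b + S')) (Set.Ici 0) :=
    hf_cont.comp (by fun_prop) hmap
  have hch : ContinuousOn h (Set.Ici 0) := continuousOn_id.mul hcomp
  -- derivative of cdf ∘ shift
  have hcdf_shift : ∀ S : ℝ, 0 < S →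
      HasDerivAt (fun y => cdf f (y + S')) (f (S + S')) S := by
    intro S hS
    have h1 : HasDerivAt (fun y => ∫ t in (0:ℝ)..y, f t) (f (S + S')) (S + S') :=
      primitive_hasDerivAt f hf_cont (by linarith)
    have h2 : HasDerivAt (fun y : ℝ => y + S') 1 S := (hasDerivAt_id S).add_const S'
    have := h1.comp S h2
    exact this.congr_deriv (by ring)
  -- derivative of Xhi
  have hXhi_deriv : ∀ S : ℝ, 0 < S →
      HasDerivAt (fun y => R * Xhi f y S' - γ * y)
        (R * (1 - cdf f (S + S')) - γ) S := by
    intro S hS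
    have hA : HasDerivAt (fun y => ∫ b in (0:ℝ)..y, h b) (S * f (S + S')) S :=
      primitive_hasDerivAt h hch hS
    have hB : HasDerivAt (fun y => y * (1 - cdf f (y + S')))
        (1 * (1 - cdf f (S + S')) + S * (0 - f (S + S'))) S :=
      (hasDerivAt_id S).mul ((hasDerivAt_const S (1:ℝ)).sub (hcdf_shift S hS))
    have hXhi : HasDerivAt (fun y => Xhi f y S')
        (1 - cdf f (S + S')) S := by
      have := hA.add hB
      simp only [Xhi, hh] at *
      exact this.congr_deriv (by ring)
    have := (hXhi.const_mul R).sub ((hasDerivAt_id S).const_mul γ)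
    exact this.congr_deriv (by ring)
  -- cdf ∘ shift is strictly increasing on (0, ∞)
  have hmono : StrictMonoOn (fun S => cdf f (S + S')) (Set.Ioi 0) := by
    intro a ha b hb hab
    simp only [Set.mem_Ioi] at ha hb
    have hints : ∀ u v : ℝ, 0 ≤ u → u ≤ v → IntervalIntegrable f MeasureTheory.volume u v := by
      intro u v hu huv
      apply ContinuousOn.intervalIntegrable
      apply hf_cont.mono
      rw [Set.uIcc_of_le huv]
      exact fun y hy => le_trans hu hy.1
    have hsplit : cdf f (a + S') + (∫ t in (a+S')..(b+S'), f t) = cdf f (b + S') := by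
      simpa [cdf] using intervalIntegral.integral_add_adjacent_intervals
        (hints 0 (a + S') le_rfl (by linarith)) (hints (a+S') (b+S') (by linarith) (by linarith))
    have hpos : 0 < ∫ t in (a+S')..(b+S'), f t := by
      apply intervalIntegral.intervalIntegral_pos_of_pos_on
        (hints (a+S') (b+S') (by linarith) (by linarith))
      · intro x hx
        exact hf_pos x (by simp only [Set.mem_Ici]; have := hx.1; linarith)
      · linarith
    simp only
    linarith
  -- assemble
  have hconvex : Convex ℝ (Set.Ici (0:ℝ)) := convex_Ici 0
  apply StrictAntiOn.strictConcaveOn_of_deriv hconvex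
  · -- continuity
    have hA : ContinuousOn (fun S => ∫ b in (0:ℝ)..S, h b) (Set.Ici 0) :=
      contOn_primitive_aux h hch
    have hF : ContinuousOn (fun S => cdf f (S + S')) (Set.Ici 0) :=
      (contOn_primitive_aux f hf_cont).comp (by fun_prop) hmap
    have : ContinuousOn (fun S => Xhi f S S') (Set.Ici 0) := by
      apply hA.add
      exact continuousOn_id.mul (continuousOn_const.sub hF)
    exact ((continuousOn_const.mul this).sub (continuousOn_const.mul continuousOn_id))
  · rw [interior_Ici]
    intro a ha b hb hab
    have hda := (hXhi_deriv a ha).deriv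
    have hdb := (hXhi_deriv b hb).deriv
    rw [hda, hdb]
    have := hmono ha hb hab
    nlinarith
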